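/- Let G be a finite connected P6-free graph and v a vertex of G such that N_2(v) induces a complete subgraph. Suppose that every vertex x ∈ N_2(v) that has a neighbor in a connected component Q of the induced subgraph G[N_3(v) ∪ N_4(v)] which is not a clique also has a non-neighbor in Q, and suppose that at least one connected component of G[N_3(v) ∪ N_4(v)] is not a clique. Then there exists a vertex b* ∈ N_2(v) that has a neighbor in every connected component of G[N_3(v) ∪ N_4(v)] which is not a clique. -/

import Mathlib

open SimpleGraph

/-- The `i`-th distance level of a vertex `v`: the set of vertices at distance exactly `i`
from `v` in `G`. -/
def distLevel {V : Type*} (G : SimpleGraph V) (v : V) (i : ℕ) : Set V :=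
  {u : V | G.dist v u = i}

/-- A graph is `P₆`-free if it contains no induced subgraph isomorphic to the chordless
path on 6 vertices. -/
def P6Free {V : Type*} (G : SimpleGraph V) : Prop :=
  ¬ ∃ f : Fin 6 ↪ V, ∀ i j : Fin 6,
      G.Adj (f i) (f j) ↔ ((i : ℕ) + 1 = (j : ℕ) ∨ (j : ℕ) + 1 = (i : ℕ))

/-- `D` is an efficient dominating set of `G`: every vertex is dominated by exactly one
vertex of `D` (a vertex dominates itself and its neighbors). -/
def IsEDS {V : Type*} (G : SimpleGraph V) (D : Set V) : Prop :=
  ∀ u : V, ∃! d : V, d ∈ D ∧ (d = u ∨ G.Adj d u)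

/-- `Q` is (the vertex set of) a connected component of the subgraph of `G` induced by `S`:
`Q` is a nonempty subset of `S`, `Q` induces a connected graph, and `Q` is closed under
adjacency within `S`. -/
def IsCompOf {V : Type*} (G : SimpleGraph V) (S Q : Set V) : Prop :=
  Q ⊆ S ∧ Q.Nonempty ∧ (G.induce Q).Connected ∧
    ∀ x ∈ Q, ∀ y ∈ S, G.Adj x y → y ∈ Q

/- ---------- auxiliary lemmas ---------- -/

lemma comp_subset' {V : Type*} {G : SimpleGraph V} {S Q1 Q2 : Set V}
    (h1 : IsCompOf G S Q1) (h2 : IsCompOf G S Q2) {z : V} (hz1 : z ∈ Q1) (hz2 : z ∈ Q2) :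
    Q1 ⊆ Q2 := by
  obtain ⟨hQ1S, -, hc1, -⟩ := h1
  obtain ⟨-, -, -, hcl2⟩ := h2
  intro x hx
  obtain ⟨p⟩ := hc1.preconnected ⟨z, hz1⟩ ⟨x, hx⟩
  have key : ∀ {a b : Q1} (_ : (G.induce Q1).Walk a b), (a : V) ∈ Q2 → (b : V) ∈ Q2 := by
    intro a b p
    induction p with
    | nil => exact fun h => h
    | cons h p ih =>
      intro ha
      exact ih (hcl2 _ ha _ (hQ1S (Subtype.mem _)) h)
  exact key p hz2

lemma comp_eq' {V : Type*} {G : SimpleGraph V} {S Q1 Q2 : Set V}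
    (h1 : IsCompOf G S Q1) (h2 : IsCompOf G S Q2) (h : (Q1 ∩ Q2).Nonempty) : Q1 = Q2 := by
  obtain ⟨z, hz1, hz2⟩ := h
  exact Set.Subset.antisymm (comp_subset' h1 h2 hz1 hz2) (comp_subset' h2 h1 hz2 hz1)

lemma flip_edge' {V : Type*} {G : SimpleGraph V} {Q : Set V}
    (hc : (G.induce Q).Connected) {a c b : V} (ha : a ∈ Q) (hcQ : c ∈ Q)
    (hba : G.Adj b a) (hbc : ¬ G.Adj b c) :
    ∃ u ∈ Q, ∃ w ∈ Q, G.Adj u w ∧ G.Adj b u ∧ ¬ G.Adj b w := by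
  obtain ⟨p⟩ := hc.preconnected ⟨a, ha⟩ ⟨c, hcQ⟩
  have key : ∀ {x y : Q} (_ : (G.induce Q).Walk x y), G.Adj b (x : V) → ¬ G.Adj b (y : V) →
      ∃ u ∈ Q, ∃ w ∈ Q, G.Adj u w ∧ G.Adj b u ∧ ¬ G.Adj b w := by
    intro x y p
    induction p with
    | nil => intro h1 h2; exact absurd h1 h2
    | @cons x m y h p ih =>
      intro h1 h2
      by_cases hm : G.Adj b (m : V)
      · exact ih hm h2
      · exact ⟨x, x.2, m, m.2, h, h1, hm⟩
  exact key p hba hbc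

lemma dist_pred' {V : Type*} {G : SimpleGraph V} (hconn : G.Connected) {v y : V} {k : ℕ}
    (h : G.dist v y = k + 1) : ∃ x : V, G.Adj x y ∧ G.dist v x = k := by
  have hne : G.dist v y ≠ 0 := by omega
  obtain ⟨p, hp⟩ := exists_walk_of_dist_ne_zero hne
  cases hq : p.reverse with
  | nil =>
    exfalso
    have := congrArg Walk.length hq
    simp [hp, h] at this
    simp at h
  | @cons _ x _ hadj q =>
    refine ⟨x, hadj.symm, ?_⟩
    have hlen : q.length = k := by
      have := congrArg Walk.length hq
      simp [hp, h] at this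
      omega
    have h1 : G.dist v x ≤ k := by
      have := SimpleGraph.dist_le q.reverse
      simpa [hlen] using this
    have h2 : k ≤ G.dist v x := by
      have htri := hconn.dist_triangle (u := v) (v := x) (w := y)
      have : G.dist x y ≤ 1 := by
        have : G.dist x y = 1 := dist_eq_one_iff_adj.mpr hadj.symm
        omega
      omega
    omega

set_option maxHeartbeats 1000000 in
lemma p6_from' {V : Type*} {G : SimpleGraph V} (hP6 : P6Free G) {w u b1 b2 z z' : V}
    (a01 : G.Adj w u) (a12 : G.Adj u b1) (a23 : G.Adj b1 b2) (a34 : G.Adj b2 z)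
    (a45 : G.Adj z z')
    (n02 : ¬G.Adj w b1) (n03 : ¬G.Adj w b2) (n04 : ¬G.Adj w z) (n05 : ¬G.Adj w z')
    (n13 : ¬G.Adj u b2) (n14 : ¬G.Adj u z) (n15 : ¬G.Adj u z')
    (n24 : ¬G.Adj b1 z) (n25 : ¬G.Adj b1 z') (n35 : ¬G.Adj b2 z')
    (e02 : w ≠ b1) (e03 : w ≠ b2) (e04 : w ≠ z) (e05 : w ≠ z')
    (e13 : u ≠ b2) (e14 : u ≠ z) (e15 : u ≠ z')
    (e24 : b1 ≠ z) (e25 : b1 ≠ z') (e35 : b2 ≠ z') : False := by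
  have e01 : w ≠ u := a01.ne
  have e12 : u ≠ b1 := a12.ne
  have e23 : b1 ≠ b2 := a23.ne
  have e34 : b2 ≠ z := a34.ne
  have e45 : z ≠ z' := a45.ne
  apply hP6
  refine ⟨⟨fun i => match i with
    | 0 => w | 1 => u | 2 => b1 | 3 => b2 | 4 => z | 5 => z', ?_⟩, ?_⟩
  · intro i j h
    fin_cases i <;> fin_cases j <;>
      first
      | rfl
      | exact absurd h e01 | exact absurd h.symm e01
      | exact absurd h e02 | exact absurd h.symm e02
      | exact absurd h e03 | exact absurd h.symm e03
      | exact absurd h e04 | exact absurd h.symm e04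
      | exact absurd h e05 | exact absurd h.symm e05
      | exact absurd h e12 | exact absurd h.symm e12
      | exact absurd h e13 | exact absurd h.symm e13
      | exact absurd h e14 | exact absurd h.symm e14
      | exact absurd h e15 | exact absurd h.symm e15
      | exact absurd h e23 | exact absurd h.symm e23
      | exact absurd h e24 | exact absurd h.symm e24
      | exact absurd h e25 | exact absurd h.symm e25
      | exact absurd h e34 | exact absurd h.symm e34
      | exact absurd h e35 | exact absurd h.symm e35
      | exact absurd h e45 | exact absurd h.symm e45
  · intro i j
    fin_cases i <;> fin_cases j <;>
      first
      | exact iff_of_true a01 (by decide) | exact iff_of_true a01.symm (by decide)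
      | exact iff_of_true a12 (by decide) | exact iff_of_true a12.symm (by decide)
      | exact iff_of_true a23 (by decide) | exact iff_of_true a23.symm (by decide)
      | exact iff_of_true a34 (by decide) | exact iff_of_true a34.symm (by decide)
      | exact iff_of_true a45 (by decide) | exact iff_of_true a45.symm (by decide)
      | exact iff_of_false (G.irrefl) (by decide)
      | exact iff_of_false n02 (by decide) | exact iff_of_false (fun h => n02 h.symm) (by decide)
      | exact iff_of_false n03 (by decide) | exact iff_of_false (fun h => n03 h.symm) (by decide)
      | exact iff_of_false n04 (by decide) | exact iff_of_false (fun h => n04 h.symm) (by decide)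
      | exact iff_of_false n05 (by decide) | exact iff_of_false (fun h => n05 h.symm) (by decide)
      | exact iff_of_false n13 (by decide) | exact iff_of_false (fun h => n13 h.symm) (by decide)
      | exact iff_of_false n14 (by decide) | exact iff_of_false (fun h => n14 h.symm) (by decide)
      | exact iff_of_false n15 (by decide) | exact iff_of_false (fun h => n15 h.symm) (by decide)
      | exact iff_of_false n24 (by decide) | exact iff_of_false (fun h => n24 h.symm) (by decide)
      | exact iff_of_false n25 (by decide) | exact iff_of_false (fun h => n25 h.symm) (by decide)
      | exact iff_of_false n35 (by decide) | exact iff_of_false (fun h => n35 h.symm) (by decide)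

/-- In a finite connected `P₆`-free graph in which `N₂(v)` is a clique, if every vertex
of `N₂(v)` contacting a non-clique component of `G[N₃(v) ∪ N₄(v)]` also has a
non-neighbor in it, and at least one component of `G[N₃(v) ∪ N₄(v)]` is not a clique,
then some vertex `b* ∈ N₂(v)` contacts every non-clique component of
`G[N₃(v) ∪ N₄(v)]`. -/
theorem stmt_9 {V : Type*} [Fintype V] (G : SimpleGraph V) (hconn : G.Connected)
    (hP6 : P6Free G) (v : V) (hclique : G.IsClique (distLevel G v 2))
    (hdist : ∀ x ∈ distLevel G v 2, ∀ Q : Set V,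
      IsCompOf G (distLevel G v 3 ∪ distLevel G v 4) Q → ¬ G.IsClique Q →
      (∃ y ∈ Q, G.Adj x y) → ∃ y ∈ Q, ¬ G.Adj x y)
    (hex : ∃ Q : Set V,
      IsCompOf G (distLevel G v 3 ∪ distLevel G v 4) Q ∧ ¬ G.IsClique Q) :
    ∃ b ∈ distLevel G v 2, ∀ Q : Set V,
      IsCompOf G (distLevel G v 3 ∪ distLevel G v 4) Q → ¬ G.IsClique Q →
      ∃ y ∈ Q, G.Adj b y := by
  set S := distLevel G v 3 ∪ distLevel G v 4 with hS
  -- members of S have distance 3 or 4 from v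
  have hSdist : ∀ x ∈ S, G.dist v x = 3 ∨ G.dist v x = 4 := by
    rintro x (h | h)
    · exact Or.inl h
    · exact Or.inr h
  -- a vertex of N₂ is never in S
  have hne2S : ∀ x ∈ distLevel G v 2, ∀ y ∈ S, x ≠ y := by
    intro x hx y hy h
    have hx2 : G.dist v x = 2 := hx
    rcases hSdist y hy with h3 | h3 <;> rw [h] at hx2 <;> omega
  -- every component of S is contacted by some vertex of N₂
  have hcontact : ∀ Q : Set V, IsCompOf G S Q → ∃ x ∈ distLevel G v 2, ∃ y ∈ Q, G.Adj x y := by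
    intro Q hQ
    obtain ⟨hQS, ⟨u0, hu0⟩, hQconn, hQcl⟩ := hQ
    have hget3 : ∃ y ∈ Q, G.dist v y = 3 := by
      rcases hSdist u0 (hQS hu0) with h3 | h4
      · exact ⟨u0, hu0, h3⟩
      · obtain ⟨x1, hx1adj, hx1d⟩ := dist_pred' hconn (k := 3) h4
        have hx1S : x1 ∈ S := Or.inl hx1d
        exact ⟨x1, hQcl _ hu0 _ hx1S hx1adj.symm, hx1d⟩
    obtain ⟨y, hyQ, hy3⟩ := hget3
    obtain ⟨x, hxadj, hxd⟩ := dist_pred' hconn (k := 2) hy3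
    exact ⟨x, hxd, y, hyQ, hxadj⟩
  -- vertices of distinct components are non-adjacent
  have hcross : ∀ Q1 Q2 : Set V, IsCompOf G S Q1 → IsCompOf G S Q2 → Q1 ≠ Q2 →
      ∀ x ∈ Q1, ∀ y ∈ Q2, ¬ G.Adj x y := by
    intro Q1 Q2 h1 h2 hne x hx y hy hadj
    have hyQ1 : y ∈ Q1 := h1.2.2.2 x hx y (h2.1 hy) hadj
    exact hne (comp_eq' h1 h2 ⟨y, hyQ1, hy⟩)
  -- vertices of distinct components are distinct
  have hcrossne : ∀ Q1 Q2 : Set V, IsCompOf G S Q1 → IsCompOf G S Q2 → Q1 ≠ Q2 →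
      ∀ x ∈ Q1, ∀ y ∈ Q2, x ≠ y := by
    rintro Q1 Q2 h1 h2 hne x hx y hy rfl
    exact hne (comp_eq' h1 h2 ⟨_, hx, hy⟩)
  -- Key step: if b1 contacts non-clique comp Q1 but misses non-clique comp Q2,
  -- and b2 contacts Q2, then b2 contacts Q1.
  have key : ∀ b1 ∈ distLevel G v 2, ∀ b2 ∈ distLevel G v 2,
      ∀ Q1 Q2 : Set V, IsCompOf G S Q1 → IsCompOf G S Q2 → ¬ G.IsClique Q1 →
      ¬ G.IsClique Q2 → Q1 ≠ Q2 →
      (∃ y ∈ Q1, G.Adj b1 y) → ¬ (∃ y ∈ Q2, G.Adj b1 y) → (∃ y ∈ Q2, G.Adj b2 y) →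
      ∃ y ∈ Q1, G.Adj b2 y := by
    intro b1 hb1 b2 hb2 Q1 Q2 hQ1 hQ2 hnc1 hnc2 hQne hc1 hm2 hc2
    by_contra hm1
    -- b1 has a neighbor and a non-neighbor in Q1; pick an edge u-w with b1~u, b1≁w
    obtain ⟨c, hcQ1, hbc⟩ := hdist b1 hb1 Q1 hQ1 hnc1 hc1
    obtain ⟨a, haQ1, hba⟩ := hc1
    obtain ⟨u, huQ1, w, hwQ1, huw, hbu, hbw⟩ := flip_edge' hQ1.2.2.1 haQ1 hcQ1 hba hbc
    -- similarly for b2 on Q2 : edge z-z' with b2~z, b2≁z'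
    obtain ⟨c2, hc2Q2, hb2c2⟩ := hdist b2 hb2 Q2 hQ2 hnc2 hc2
    obtain ⟨a2, ha2Q2, hb2a2⟩ := hc2
    obtain ⟨z, hzQ2, z', hz'Q2, hzz', hb2z, hb2z'⟩ :=
      flip_edge' hQ2.2.2.1 ha2Q2 hc2Q2 hb2a2 hb2c2
    -- b1 ≠ b2 and they are adjacent (N₂ is a clique)
    have hb12ne : b1 ≠ b2 := by
      rintro rfl; exact hm2 ⟨z, hzQ2, hb2z⟩
    have hb12 : G.Adj b1 b2 := hclique hb1 hb2 hb12ne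
    -- build the induced P₆ : w - u - b1 - b2 - z - z'
    exact p6_from' hP6 huw.symm hbu.symm hb12 hb2z hzz'
      (fun h => hbw h.symm)
      (fun h => hm1 ⟨w, hwQ1, h.symm⟩)
      (hcross Q1 Q2 hQ1 hQ2 hQne w hwQ1 z hzQ2)
      (hcross Q1 Q2 hQ1 hQ2 hQne w hwQ1 z' hz'Q2)
      (fun h => hm1 ⟨u, huQ1, h.symm⟩)
      (hcross Q1 Q2 hQ1 hQ2 hQne u huQ1 z hzQ2)
      (hcross Q1 Q2 hQ1 hQ2 hQne u huQ1 z' hz'Q2)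
      (fun h => hm2 ⟨z, hzQ2, h⟩)
      (fun h => hm2 ⟨z', hz'Q2, h⟩)
      hb2z'
      (fun h => hne2S b1 hb1 w (hQ1.1 hwQ1) h.symm)
      (fun h => hne2S b2 hb2 w (hQ1.1 hwQ1) h.symm)
      (hcrossne Q1 Q2 hQ1 hQ2 hQne w hwQ1 z hzQ2)
      (hcrossne Q1 Q2 hQ1 hQ2 hQne w hwQ1 z' hz'Q2)
      (fun h => hne2S b2 hb2 u (hQ1.1 huQ1) h.symm)
      (hcrossne Q1 Q2 hQ1 hQ2 hQne u huQ1 z hzQ2)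
      (hcrossne Q1 Q2 hQ1 hQ2 hQne u huQ1 z' hz'Q2)
      (hne2S b1 hb1 z (hQ2.1 hzQ2))
      (hne2S b1 hb1 z' (hQ2.1 hz'Q2))
      (hne2S b2 hb2 z' (hQ2.1 hz'Q2))
  -- the set of non-clique components contacted by a vertex
  set C : V → Set (Set V) :=
    fun b => {Q | IsCompOf G S Q ∧ ¬ G.IsClique Q ∧ ∃ y ∈ Q, G.Adj b y} with hC
  -- N₂ is nonempty
  obtain ⟨Q0, hQ0, hQ0nc⟩ := hex
  obtain ⟨x0, hx0, -⟩ := hcontact Q0 hQ0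
  -- choose b* with C b* maximal
  obtain ⟨b, hbmem, hbmax⟩ :=
    Set.Finite.exists_maximalFor C (distLevel G v 2) (Set.toFinite _) ⟨x0, hx0⟩
  refine ⟨b, hbmem, ?_⟩
  intro Q hQ hQnc
  by_contra hm
  obtain ⟨b', hb', y', hy'Q, hb'y⟩ := hcontact Q hQ
  have hsub : C b ⊆ C b' := by
    rintro Qs ⟨hQs, hQsnc, hcons⟩
    have hQQs : Qs ≠ Q := by
      rintro rfl; exact hm hcons
    exact ⟨hQs, hQsnc, key b hbmem b' hb' Qs Q hQs hQ hQsnc hQnc hQQs hcons hm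
      ⟨y', hy'Q, hb'y⟩⟩
  have heq : C b = C b' := Set.Subset.antisymm hsub (hbmax hb' hsub)
  have : Q ∈ C b' := ⟨hQ, hQnc, y', hy'Q, hb'y⟩
  rw [← heq] at this
  exact hm this.2.2
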